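/- Let K be a symmetric invertible r×r integer matrix all of whose diagonal entries are even, let M ≥ 1 be an integer, and let s ∈ ℤ^r. Set Λ = {u ∈ ℤ^r : M·u ∈ Kℤ^r} and define f : Λ → ℂ by f(u) = exp(2πi·sᵀK⁻¹u)·exp(iπ·M·uᵀK⁻¹u). Then f takes values in the circle group, f(u + Kv) = f(u) for all u ∈ Λ and v ∈ ℤ^r, and f(u + u') = f(u)·f(u') for all u, u' ∈ Λ; hence f induces a group homomorphism from the M-torsion subgroup Λ/Kℤ^r of ℤ^r/Kℤ^r to the circle group of unit complex numbers. -/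

import Mathlib

noncomputable section

/-- The rational quadratic form `aᵀ K⁻¹ b` (computed over `ℝ`) attached to an integer
matrix `K`. -/
def qform (r : ℕ) (K : Matrix (Fin r) (Fin r) ℤ) (a b : Fin r → ℤ) : ℝ :=
  ∑ i : Fin r, ∑ j : Fin r,
    (a i : ℝ) * ((K.map (fun n : ℤ => (n : ℝ)))⁻¹ i j) * (b j : ℝ)

/-- The relabeling phase `f(u) = exp(2πi sᵀK⁻¹u) · exp(iπ M uᵀK⁻¹u)`. -/
def phaseF (r : ℕ) (K : Matrix (Fin r) (Fin r) ℤ) (M : ℕ) (s : Fin r → ℤ)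
    (u : Fin r → ℤ) : ℂ :=
  Complex.exp (2 * (Real.pi : ℂ) * Complex.I * (qform r K s u : ℝ)) *
    Complex.exp ((Real.pi : ℂ) * Complex.I * (M : ℂ) * (qform r K u u : ℝ))

/-- The anyon quotient `ℤ^r / K ℤ^r`. -/
abbrev KQuot (r : ℕ) (K : Matrix (Fin r) (Fin r) ℤ) : Type :=
  (Fin r → ℤ) ⧸ LinearMap.range (Matrix.mulVecLin K)

namespace RelabelAux

open Matrix Complex

variable {r : ℕ}

/-- The real matrix obtained from `K`. -/
def KR (K : Matrix (Fin r) (Fin r) ℤ) : Matrix (Fin r) (Fin r) ℝ :=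
  K.map (fun n : ℤ => (n : ℝ))

/-- Cast an integer vector to a real vector. -/
def cR (v : Fin r → ℤ) : Fin r → ℝ := fun i => (v i : ℝ)

lemma qform_eq (K : Matrix (Fin r) (Fin r) ℤ) (a b : Fin r → ℤ) :
    qform r K a b = cR a ⬝ᵥ (KR K)⁻¹ *ᵥ cR b := by
  unfold qform KR cR
  simp only [dotProduct, Matrix.mulVec, Finset.mul_sum]
  exact Finset.sum_congr rfl fun i _ => Finset.sum_congr rfl fun j _ => by ring

lemma KR_det_unit {K : Matrix (Fin r) (Fin r) ℤ} (hdet : K.det ≠ 0) :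
    IsUnit (KR K).det := by
  have h : (KR K).det = ((K.det : ℤ) : ℝ) := by
    have : KR K = (Int.castRingHom ℝ).mapMatrix K := rfl
    rw [this, ← RingHom.map_det]; rfl
  rw [h, isUnit_iff_ne_zero]
  exact_mod_cast hdet

lemma KR_isSymm {K : Matrix (Fin r) (Fin r) ℤ} (hsymm : K.IsSymm) : (KR K).IsSymm := by
  unfold Matrix.IsSymm KR
  rw [← Matrix.transpose_map, hsymm]

lemma cR_add (a b : Fin r → ℤ) : cR (a + b) = cR a + cR b := by
  funext i; simp [cR]

lemma cR_mulVec (K : Matrix (Fin r) (Fin r) ℤ) (v : Fin r → ℤ) :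
    cR (K.mulVec v) = (KR K) *ᵥ cR v := by
  funext i
  simp [cR, KR, Matrix.mulVec, dotProduct]

lemma cR_nsmul (M : ℕ) (v : Fin r → ℤ) : cR (M • v) = (M : ℝ) • cR v := by
  funext i; simp [cR]

lemma cR_dot (a b : Fin r → ℤ) : cR a ⬝ᵥ cR b = ((a ⬝ᵥ b : ℤ) : ℝ) := by
  simp [cR, dotProduct]

lemma qform_add_left (K : Matrix (Fin r) (Fin r) ℤ) (a a' b : Fin r → ℤ) :
    qform r K (a + a') b = qform r K a b + qform r K a' b := by
  simp [qform_eq, cR_add, add_dotProduct]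

lemma qform_add_right (K : Matrix (Fin r) (Fin r) ℤ) (a b b' : Fin r → ℤ) :
    qform r K a (b + b') = qform r K a b + qform r K a b' := by
  simp [qform_eq, cR_add, Matrix.mulVec_add, dotProduct_add]

lemma qform_symm {K : Matrix (Fin r) (Fin r) ℤ} (hsymm : K.IsSymm)
    (a b : Fin r → ℤ) : qform r K a b = qform r K b a := by
  have hA : ((KR K)⁻¹)ᵀ = (KR K)⁻¹ := by
    rw [Matrix.transpose_nonsing_inv, (KR_isSymm hsymm).eq]
  rw [qform_eq, qform_eq]
  calc cR a ⬝ᵥ (KR K)⁻¹ *ᵥ cR b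
      = cR a ᵥ* (KR K)⁻¹ ⬝ᵥ cR b := Matrix.dotProduct_mulVec _ _ _
    _ = cR a ᵥ* ((KR K)⁻¹)ᵀ ⬝ᵥ cR b := by rw [hA]
    _ = ((KR K)⁻¹ *ᵥ cR a) ⬝ᵥ cR b := by rw [Matrix.vecMul_transpose]
    _ = cR b ⬝ᵥ (KR K)⁻¹ *ᵥ cR a := dotProduct_comm _ _

lemma qform_K_right {K : Matrix (Fin r) (Fin r) ℤ} (hdet : K.det ≠ 0)
    (a v : Fin r → ℤ) : qform r K a (K.mulVec v) = ((a ⬝ᵥ v : ℤ) : ℝ) := by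
  rw [qform_eq, cR_mulVec, Matrix.mulVec_mulVec,
    Matrix.nonsing_inv_mul _ (KR_det_unit hdet), Matrix.one_mulVec, cR_dot]

lemma qform_torsion {K : Matrix (Fin r) (Fin r) ℤ} (hsymm : K.IsSymm)
    (hdet : K.det ≠ 0) {M : ℕ} {u w : Fin r → ℤ} (h : M • u = K.mulVec w)
    (b : Fin r → ℤ) : (M : ℝ) * qform r K u b = ((b ⬝ᵥ w : ℤ) : ℝ) := by
  have h1 : qform r K (M • u) b = (M : ℝ) * qform r K u b := by
    rw [qform_eq, qform_eq, cR_nsmul, smul_dotProduct, smul_eq_mul]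
  rw [← h1, h, qform_symm hsymm, qform_K_right hdet]

lemma even_quad {K : Matrix (Fin r) (Fin r) ℤ} (hsymm : K.IsSymm)
    (heven : ∀ i, Even (K i i)) (v : Fin r → ℤ) : Even (v ⬝ᵥ K.mulVec v) := by
  have h2 : ((2 : ℕ) : ℤ) ∣ (v ⬝ᵥ K.mulVec v) := by
    rw [← ZMod.intCast_zmod_eq_zero_iff_dvd]
    have h : ((v ⬝ᵥ K.mulVec v : ℤ) : ZMod 2)
        = ∑ x ∈ (Finset.univ ×ˢ Finset.univ : Finset (Fin r × Fin r)),
            ((v x.1 : ZMod 2) * ((K x.1 x.2 : ℤ) : ZMod 2) * (v x.2 : ZMod 2)) := by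
      rw [Finset.sum_product]
      simp [dotProduct, Matrix.mulVec, Finset.mul_sum, mul_assoc]
    rw [h]
    refine Finset.sum_involution (fun a _ => a.swap) ?_ ?_
      (fun a ha => Finset.mem_product.mpr ⟨Finset.mem_univ _, Finset.mem_univ _⟩)
      (fun a ha => Prod.swap_swap a)
    · intro a ha
      have hK : ((K a.2 a.1 : ℤ) : ZMod 2) = ((K a.1 a.2 : ℤ) : ZMod 2) :=
        congrArg _ (hsymm.apply a.1 a.2)
      simp only [Prod.fst_swap, Prod.snd_swap, hK]
      rw [show (v a.2 : ZMod 2) * ((K a.1 a.2 : ℤ) : ZMod 2) * (v a.1 : ZMod 2)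
          = (v a.1 : ZMod 2) * ((K a.1 a.2 : ℤ) : ZMod 2) * (v a.2 : ZMod 2) by ring]
      exact CharTwo.add_self_eq_zero _
    · intro a ha hne hsw
      apply hne
      have h12 : a.2 = a.1 := congrArg Prod.fst hsw
      have hdiag : ((K a.1 a.1 : ℤ) : ZMod 2) = 0 := by
        rw [ZMod.intCast_zmod_eq_zero_iff_dvd]
        exact_mod_cast (heven a.1).two_dvd
      rw [h12, hdiag]
      ring
  obtain ⟨c, hc⟩ := h2
  exact ⟨c, by omega⟩

lemma phaseF_eq_exp (K : Matrix (Fin r) (Fin r) ℤ) (M : ℕ) (s u : Fin r → ℤ) :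
    phaseF r K M s u = Complex.exp (2 * (Real.pi : ℂ) * Complex.I * (qform r K s u : ℝ)
      + (Real.pi : ℂ) * Complex.I * (M : ℂ) * (qform r K u u : ℝ)) := by
  unfold phaseF
  rw [← Complex.exp_add]

lemma abs_phaseF (K : Matrix (Fin r) (Fin r) ℤ) (M : ℕ) (s u : Fin r → ℤ) :
    ‖phaseF r K M s u‖ = 1 := by
  rw [phaseF_eq_exp]
  rw [show 2 * (Real.pi : ℂ) * Complex.I * ((qform r K s u : ℝ) : ℂ)
      + (Real.pi : ℂ) * Complex.I * (M : ℂ) * ((qform r K u u : ℝ) : ℂ)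
      = ((2 * Real.pi * qform r K s u + Real.pi * M * qform r K u u : ℝ) : ℂ) * Complex.I
      by push_cast; ring]
  exact Complex.norm_exp_ofReal_mul_I _

lemma phaseF_shift {K : Matrix (Fin r) (Fin r) ℤ} (hsymm : K.IsSymm)
    (hdet : K.det ≠ 0) (heven : ∀ i, Even (K i i)) (M : ℕ) (s u v : Fin r → ℤ) :
    phaseF r K M s (u + K.mulVec v) = phaseF r K M s u := by
  obtain ⟨k, hk⟩ := even_quad hsymm heven v
  have h1 : qform r K s (u + K.mulVec v) = qform r K s u + ((s ⬝ᵥ v : ℤ) : ℝ) := by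
    rw [qform_add_right, qform_K_right hdet]
  have h2 : qform r K (u + K.mulVec v) (u + K.mulVec v)
      = qform r K u u + ((u ⬝ᵥ v + u ⬝ᵥ v + (k + k) : ℤ) : ℝ) := by
    rw [qform_add_left, qform_add_right, qform_add_right,
      qform_symm hsymm (K.mulVec v) u, qform_K_right hdet, qform_K_right hdet,
      show (K.mulVec v) ⬝ᵥ v = v ⬝ᵥ K.mulVec v from dotProduct_comm _ _, hk]
    push_cast
    ring
  rw [phaseF_eq_exp, phaseF_eq_exp]
  rw [Complex.exp_eq_exp_iff_exists_int]
  refine ⟨s ⬝ᵥ v + (M : ℤ) * (u ⬝ᵥ v + k), ?_⟩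
  rw [h1, h2]
  push_cast
  ring

lemma phaseF_mul {K : Matrix (Fin r) (Fin r) ℤ} (hsymm : K.IsSymm)
    (hdet : K.det ≠ 0) (M : ℕ) (s : Fin r → ℤ) {u u' w : Fin r → ℤ}
    (h : M • u = K.mulVec w) :
    phaseF r K M s (u + u') = phaseF r K M s u * phaseF r K M s u' := by
  have hsu : qform r K s (u + u') = qform r K s u + qform r K s u' :=
    qform_add_right K s u u'
  have huu : qform r K (u + u') (u + u')
      = qform r K u u + qform r K u' u' + (qform r K u u' + qform r K u u') := by
    rw [qform_add_left, qform_add_right, qform_add_right, qform_symm hsymm u' u]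
    ring
  have hcross : (M : ℝ) * qform r K u u' = ((u' ⬝ᵥ w : ℤ) : ℝ) :=
    qform_torsion hsymm hdet h u'
  have hcrossC : (M : ℂ) * ((qform r K u u' : ℝ) : ℂ) = ((u' ⬝ᵥ w : ℤ) : ℂ) := by
    exact_mod_cast congrArg (fun x : ℝ => (x : ℂ)) hcross
  rw [phaseF_eq_exp, phaseF_eq_exp, phaseF_eq_exp, ← Complex.exp_add]
  rw [Complex.exp_eq_exp_iff_exists_int]
  refine ⟨u' ⬝ᵥ w, ?_⟩
  rw [hsu, huu]
  push_cast
  linear_combination (2 * (Real.pi : ℂ) * Complex.I) * hcrossC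

end RelabelAux

/-- On `Λ = {u : M u ∈ K ℤ^r}` the phase `f(u) = M_{s,u} θ_u^M` is a unit complex number,
is invariant under `u ↦ u + K v`, and is multiplicative; hence it induces a homomorphism
from the `M`-torsion subgroup of `ℤ^r/Kℤ^r` to the circle group. -/
theorem relabeling_phase_is_homomorphism (r : ℕ) (K : Matrix (Fin r) (Fin r) ℤ)
    (hsymm : K.IsSymm) (hdet : K.det ≠ 0) (heven : ∀ i, Even (K i i))
    (M : ℕ) (hM : 1 ≤ M) (s : Fin r → ℤ) :
    (∀ u : Fin r → ℤ, (∃ w : Fin r → ℤ, M • u = K.mulVec w) →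
      ‖phaseF r K M s u‖ = 1) ∧
    (∀ u v : Fin r → ℤ, (∃ w : Fin r → ℤ, M • u = K.mulVec w) →
      phaseF r K M s (u + K.mulVec v) = phaseF r K M s u) ∧
    (∀ u u' : Fin r → ℤ, (∃ w : Fin r → ℤ, M • u = K.mulVec w) →
      (∃ w : Fin r → ℤ, M • u' = K.mulVec w) →
      phaseF r K M s (u + u') = phaseF r K M s u * phaseF r K M s u') ∧
    (∃ F : Submodule.torsionBy ℤ (KQuot r K) (M : ℤ) → ℂ,
      (∀ x, ‖F x‖ = 1) ∧
      (∀ x y, F (x + y) = F x * F y) ∧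
      (∀ (u : Fin r → ℤ)
        (hu : (Submodule.Quotient.mk u : KQuot r K) ∈
          Submodule.torsionBy ℤ (KQuot r K) (M : ℤ)),
        F ⟨Submodule.Quotient.mk u, hu⟩ = phaseF r K M s u)) := by
  refine ⟨fun u _ => RelabelAux.abs_phaseF K M s u,
    fun u v _ => RelabelAux.phaseF_shift hsymm hdet heven M s u v,
    fun u u' hu _ => by
      obtain ⟨w, hw⟩ := hu
      exact RelabelAux.phaseF_mul hsymm hdet M s hw,
    ?_⟩
  set p := LinearMap.range (Matrix.mulVecLin K) with hp
  -- the phase only depends on the class mod `K ℤ^r`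
  have hwd : ∀ a b : Fin r → ℤ,
      (Submodule.Quotient.mk a : KQuot r K) = Submodule.Quotient.mk b →
      phaseF r K M s a = phaseF r K M s b := by
    intro a b hmk
    obtain ⟨w, hw⟩ := (Submodule.Quotient.eq p).mp hmk
    rw [Matrix.mulVecLin_apply] at hw
    have ha : a = b + K.mulVec w := by rw [hw]; abel
    rw [ha, RelabelAux.phaseF_shift hsymm hdet heven M s b w]
  -- choose representatives
  let rep : Submodule.torsionBy ℤ (KQuot r K) (M : ℤ) → (Fin r → ℤ) :=
    fun x => Classical.choose (Submodule.Quotient.mk_surjective p x.1)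
  have hrep : ∀ x, (Submodule.Quotient.mk (rep x) : KQuot r K) = x.1 :=
    fun x => Classical.choose_spec (Submodule.Quotient.mk_surjective p x.1)
  have htor : ∀ (x : Submodule.torsionBy ℤ (KQuot r K) (M : ℤ)) (a : Fin r → ℤ),
      (Submodule.Quotient.mk a : KQuot r K) = x.1 → ∃ w, M • a = K.mulVec w := by
    intro x a ha
    have hz := x.2
    rw [Submodule.mem_torsionBy_iff, ← ha] at hz
    have h0 : (Submodule.Quotient.mk ((M : ℤ) • a) : KQuot r K) = 0 := by
      rw [Submodule.Quotient.mk_smul]; exact hz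
    obtain ⟨w, hw⟩ := (Submodule.Quotient.mk_eq_zero p).mp h0
    exact ⟨w, by rw [← natCast_zsmul, ← hw, Matrix.mulVecLin_apply]⟩
  refine ⟨fun x => phaseF r K M s (rep x), ?_, ?_, ?_⟩
  · intro x
    exact RelabelAux.abs_phaseF K M s (rep x)
  · intro x y
    obtain ⟨w, hw⟩ := htor x (rep x) (hrep x)
    have hsum : (Submodule.Quotient.mk (rep (x + y)) : KQuot r K)
        = Submodule.Quotient.mk (rep x + rep y) := by
      rw [hrep (x + y), Submodule.Quotient.mk_add, hrep x, hrep y]; rfl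
    show phaseF r K M s (rep (x + y)) = phaseF r K M s (rep x) * phaseF r K M s (rep y)
    rw [hwd _ _ hsum]
    exact RelabelAux.phaseF_mul hsymm hdet M s hw
  · intro u hu
    exact hwd _ _ (hrep ⟨Submodule.Quotient.mk u, hu⟩)
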